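/- For every x ∈ [1, (3√3)/2 − 3/2) there exists a centered two-valued random variable ξ with Eξ² = 1, Eξ⁴ = x, and P(ξ ≤ 0) = 1/2 − (1/2)√((x−1)/(x+3)). -/

import Mathlib

open MeasureTheory ProbabilityTheory Real

lemma integrable_dirac' {f : ℝ → ℝ} {a : ℝ} : Integrable f (Measure.dirac a) := by
  refine (integrable_const (f a)).congr ?_
  rw [Filter.EventuallyEq, ae_dirac_eq]
  simp

set_option maxHeartbeats 1000000 in
theorem stmt8 (x : ℝ) (hx1 : 1 ≤ x) (hx2 : x < 3 * Real.sqrt 3 / 2 - 3 / 2) :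
    ∃ (μ : Measure ℝ) (_ : IsProbabilityMeasure μ) (x₁ x₂ : ℝ), x₁ ≠ x₂ ∧
      μ (({x₁, x₂} : Set ℝ)ᶜ) = 0 ∧
      (∫ y, y ∂μ) = 0 ∧ (∫ y, y ^ 2 ∂μ) = 1 ∧ (∫ y, y ^ 4 ∂μ) = x ∧
      μ {y | y ≤ 0} = ENNReal.ofReal (1 / 2 - Real.sqrt ((x - 1) / (x + 3)) / 2) := by
  have hx3 : (0:ℝ) < x + 3 := by linarith
  have hx1' : (0:ℝ) ≤ x - 1 := by linarith
  obtain ⟨s, hs⟩ : ∃ s, s = Real.sqrt ((x - 1) * (x + 3)) := ⟨_, rfl⟩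
  have hs0 : 0 ≤ s := hs ▸ Real.sqrt_nonneg _
  have hs2 : s ^ 2 = (x - 1) * (x + 3) := by rw [hs]; exact Real.sq_sqrt (by positivity)
  obtain ⟨t, ht⟩ : ∃ t, t = (x + 1 + s) / 2 := ⟨_, rfl⟩
  have ht1 : 1 ≤ t := by rw [ht]; linarith
  have ht0 : 0 < t := by linarith
  have htne : t + 1 ≠ 0 := by positivity
  have htne' : t ≠ 0 := ne_of_gt ht0
  have hkey : t ^ 2 + 1 = (x + 1) * t := by rw [ht]; nlinarith [hs2]
  obtain ⟨r, hrdef⟩ : ∃ r, r = Real.sqrt t := ⟨_, rfl⟩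
  have hr0 : 0 < r := hrdef ▸ Real.sqrt_pos.mpr ht0
  have hrne : r ≠ 0 := ne_of_gt hr0
  have hr2 : r ^ 2 = t := by rw [hrdef]; exact Real.sq_sqrt ht0.le
  set a : ℝ := -r with ha
  set b : ℝ := 1 / r with hb
  set c : ℝ := 1 / (t + 1) with hc
  set d : ℝ := t / (t + 1) with hd
  have hcd : c + d = 1 := by rw [hc, hd]; field_simp; ring
  have hc0 : 0 ≤ c := by rw [hc]; positivity
  have hd0 : 0 ≤ d := by rw [hd]; positivity
  set μ : Measure ℝ := ENNReal.ofReal c • Measure.dirac a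
      + ENNReal.ofReal d • Measure.dirac b with hμ
  have hprob : IsProbabilityMeasure μ := by
    constructor
    simp [hμ, ← ENNReal.ofReal_add hc0 hd0, hcd]
  have hμapply : ∀ S : Set ℝ, μ S = ENNReal.ofReal c * (Measure.dirac a) S
      + ENNReal.ofReal d * (Measure.dirac b) S := by
    intro S; simp [hμ]
  have hint : ∀ f : ℝ → ℝ, (∫ y, f y ∂μ) = c * f a + d * f b := by
    intro f
    rw [hμ, integral_add_measure
        (integrable_dirac'.smul_measure ENNReal.ofReal_ne_top)
        (integrable_dirac'.smul_measure ENNReal.ofReal_ne_top),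
      integral_smul_measure, integral_smul_measure, integral_dirac, integral_dirac,
      ENNReal.toReal_ofReal hc0, ENNReal.toReal_ofReal hd0]
    simp
  refine ⟨μ, hprob, a, b, ?_, ?_, ?_, ?_, ?_, ?_⟩
  · intro h
    rw [ha, hb] at h
    field_simp at h
    nlinarith [hr0]
  · rw [hμapply]
    rw [Measure.dirac_apply' _ (by measurability), Measure.dirac_apply' _ (by measurability)]
    rw [Set.indicator_of_notMem (by simp), Set.indicator_of_notMem (by simp)]
    simp
  · rw [hint]
    rw [ha, hb, hc, hd]
    field_simp
    nlinarith [hr2]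
  · rw [hint]
    rw [ha, hb, hc, hd]
    have e1 : (-r) ^ 2 = t := by rw [neg_pow]; simp [hr2]
    have e2 : (1 / r) ^ 2 = 1 / t := by rw [div_pow, one_pow, hr2]
    rw [e1, e2]
    field_simp
  · rw [hint]
    rw [ha, hb, hc, hd]
    have e1 : (-r) ^ 4 = t ^ 2 := by
      have : (-r) ^ 4 = (r ^ 2) ^ 2 := by ring
      rw [this, hr2]
    have e2 : (1 / r) ^ 4 = 1 / t ^ 2 := by
      rw [div_pow, one_pow]
      have : r ^ 4 = (r ^ 2) ^ 2 := by ring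
      rw [this, hr2]
    rw [e1, e2]
    field_simp
    linear_combination (t + 1) * hkey
  · rw [hμapply]
    have hmeas : MeasurableSet {y : ℝ | y ≤ 0} := measurableSet_Iic
    have h1 : (Measure.dirac a) {y : ℝ | y ≤ 0} = 1 := by
      rw [Measure.dirac_apply' _ hmeas,
        Set.indicator_of_mem (by simp only [Set.mem_setOf_eq, ha]; linarith)]
      rfl
    have h2 : (Measure.dirac b) {y : ℝ | y ≤ 0} = 0 := by
      rw [Measure.dirac_apply' _ hmeas,
        Set.indicator_of_notMem (by simp only [Set.mem_setOf_eq, hb, not_le]; positivity)]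
    rw [h1, h2, mul_one, mul_zero, add_zero]
    congr 1
    have hu2 : Real.sqrt (x - 1) ^ 2 = x - 1 := Real.sq_sqrt hx1'
    have hv2 : Real.sqrt (x + 3) ^ 2 = x + 3 := Real.sq_sqrt hx3.le
    have hv0 : 0 < Real.sqrt (x + 3) := Real.sqrt_pos.mpr hx3
    have hu0 : 0 ≤ Real.sqrt (x - 1) := Real.sqrt_nonneg _
    have hsuv : s = Real.sqrt (x - 1) * Real.sqrt (x + 3) := by
      rw [hs, Real.sqrt_mul hx1']
    have hdiv : Real.sqrt ((x - 1) / (x + 3)) = Real.sqrt (x - 1) / Real.sqrt (x + 3) :=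
      Real.sqrt_div hx1' _
    rw [hdiv, hc, ht, hsuv]
    set u := Real.sqrt (x - 1)
    set v := Real.sqrt (x + 3)
    have hvu : 0 < v + u := by linarith
    have hne1 : (u * v + (x + 3)) ≠ 0 := by nlinarith
    field_simp
    nlinarith [hu2, hv2]
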